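/- Let P be a continuous probability transition kernel on a finite nonempty alphabet G and let φ_P be its update rule. Then for every finite word s and every u ∈ [0,1) with u < 1 − |G|·η_P(s), the map φ_P(u, ·) is constant on tree(s): for all histories w, z ∈ tree(s), φ_P(u, w) = φ_P(u, z). -/

import Mathlib

open Finset Filter

variable {G : Type*}

/-- The ball of all histories admitting `s` as a suffix.
A history is `w : ℕ → G`, index `i` encoding the symbol `w_{-(i+1)}` (index 0 = most recent).
A word `s : List G` encodes `(s_{-n},…,s_{-1})` with list index `i` = symbol `s_{-(i+1)}`. -/
def tree (s : List G) : Set (ℕ → G) := {w | ∀ i : Fin s.length, w i = s.get i}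

/-- The word `w_{-k:-1}` formed by the last `k` symbols of the history `w`. -/
def word (w : ℕ → G) (k : ℕ) : List G := List.ofFn fun i : Fin k => w i

/-- A probability transition kernel on `G`. -/
def IsKernel [Fintype G] (P : (ℕ → G) → G → ℝ) : Prop :=
  ∀ w, (∀ g, 0 ≤ P w g) ∧ ∑ g, P w g = 1

/-- Total variation distance between distributions on a finite alphabet. -/
noncomputable def tvDist [Fintype G] (p q : G → ℝ) : ℝ := (1 / 2) * ∑ a, |p a - q a|

/-- Oscillation `η_P(s)` of the kernel `P` on the ball `tree s`. -/
noncomputable def eta [Fintype G] (P : (ℕ → G) → G → ℝ) (s : List G) : ℝ :=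
  ⨆ w : tree s, ⨆ z : tree s, tvDist (P w) (P z)

/-- Coupling coefficient `a_{|s|}(g|s)`. -/
noncomputable def aCoef (P : (ℕ → G) → G → ℝ) (g : G) (s : List G) : ℝ :=
  ⨅ w : tree s, P w g

/-- Coupling coefficient `A_{|s|}(s)`. -/
noncomputable def ACoef [Fintype G] (P : (ℕ → G) → G → ℝ) (s : List G) : ℝ :=
  ∑ g, aCoef P g s

/-- `A_k^- = inf { A_k(s) : |s| = k }`. -/
noncomputable def Aminus [Fintype G] (P : (ℕ → G) → G → ℝ) (k : ℕ) : ℝ :=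
  ⨅ s : {s : List G // s.length = k}, ACoef P s.1

/-- Continuity of the kernel: continuity from the product topology (G discrete) to
the total variation distance. -/
def KernelContinuous [Fintype G] (P : (ℕ → G) → G → ℝ) : Prop :=
  ∀ w : ℕ → G, ∀ ε > 0, ∃ k : ℕ, ∀ z : ℕ → G, (∀ i < k, z i = w i) → tvDist (P w) (P z) < ε

/-- `α_k(g | w_{-k:-1})` with the convention `A_{-1}(ε) = a_{-1}(·|ε) = 0`. -/
noncomputable def alphaCoef [Fintype G] [LinearOrder G] (P : (ℕ → G) → G → ℝ)
    (k : ℕ) (g : G) (w : ℕ → G) : ℝ :=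
  (if k = 0 then 0 else ACoef P (word w (k - 1))) +
    ∑ h ∈ univ.filter (fun h => h < g),
      (aCoef P h (word w k) - if k = 0 then 0 else aCoef P h (word w (k - 1)))

/-- `β_k(g | w_{-k:-1})` with the convention `A_{-1}(ε) = a_{-1}(·|ε) = 0`. -/
noncomputable def betaCoef [Fintype G] [LinearOrder G] (P : (ℕ → G) → G → ℝ)
    (k : ℕ) (g : G) (w : ℕ → G) : ℝ :=
  (if k = 0 then 0 else ACoef P (word w (k - 1))) +
    ∑ h ∈ univ.filter (fun h => h ≤ g),
      (aCoef P h (word w k) - if k = 0 then 0 else aCoef P h (word w (k - 1)))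

/-- `φ` is the update rule of `P`: for every `u ∈ [0,1)` and history `w`, `φ u w` is the
(unique) symbol `g` such that `α_k(g|w_{-k:-1}) ≤ u < β_k(g|w_{-k:-1})` for some `k`. -/
def IsUpdateRule [Fintype G] [LinearOrder G] (P : (ℕ → G) → G → ℝ)
    (φ : ℝ → (ℕ → G) → G) : Prop :=
  ∀ u ∈ Set.Ico (0 : ℝ) 1, ∀ w : ℕ → G, ∃ k : ℕ,
    alphaCoef P k (φ u w) w ≤ u ∧ u < betaCoef P k (φ u w) w

set_option linter.unusedSectionVars false
set_option linter.unusedVariables false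

section Aux
variable [Fintype G]

lemma mem_tree_word {w z : ℕ → G} {k : ℕ} : z ∈ tree (word w k) ↔ ∀ i, i < k → z i = w i := by
  constructor
  · intro h i hi
    have := h ⟨i, by simpa [word] using hi⟩
    simpa [word] using this
  · intro h i
    have hi : (i : ℕ) < k := by have := i.2; simpa [word] using this
    rw [h i hi]; exact (List.getElem_ofFn (f := fun i : Fin k => w i) (i := i.1) _).symm

lemma self_mem_tree_word (w : ℕ → G) (k : ℕ) : w ∈ tree (word w k) :=
  mem_tree_word.2 fun _ _ => rfl

lemma word_eq_self {s : List G} {w : ℕ → G} (hw : w ∈ tree s) : word w s.length = s := by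
  have : (fun i : Fin s.length => w i) = s.get := funext fun i => hw i
  rw [word, this, List.ofFn_get]

lemma word_eq_word {s : List G} {w z : ℕ → G} (hw : w ∈ tree s) (hz : z ∈ tree s)
    {k : ℕ} (hk : k ≤ s.length) : word w k = word z k := by
  unfold word
  exact congrArg List.ofFn (funext fun i => by
    have hi : (i : ℕ) < s.length := lt_of_lt_of_le i.2 hk
    rw [hw ⟨i, hi⟩, hz ⟨i, hi⟩])

lemma aCoef_nonneg (P : (ℕ → G) → G → ℝ) (hP : IsKernel P) (g : G) (s : List G) :
    0 ≤ aCoef P g s :=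
  Real.iInf_nonneg fun w => (hP w.1).1 g

lemma aCoef_le (P : (ℕ → G) → G → ℝ) (hP : IsKernel P) (g : G) {s : List G} {w : ℕ → G}
    (hw : w ∈ tree s) : aCoef P g s ≤ P w g :=
  ciInf_le (f := fun v : tree s => P v.1 g)
    ⟨0, by rintro x ⟨v, rfl⟩; exact (hP v.1).1 g⟩ ⟨w, hw⟩

lemma aCoef_word_mono (P : (ℕ → G) → G → ℝ) (hP : IsKernel P) (w : ℕ → G) (g : G)
    {k m : ℕ} (hkm : k ≤ m) : aCoef P g (word w k) ≤ aCoef P g (word w m) := by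
  have : Nonempty (tree (word w m)) := ⟨⟨w, self_mem_tree_word w m⟩⟩
  refine le_ciInf fun z => ?_
  exact aCoef_le P hP g (mem_tree_word.2 fun i hi => mem_tree_word.1 z.2 i (hi.trans_le hkm))

lemma tvDist_le_one (P : (ℕ → G) → G → ℝ) (hP : IsKernel P) (w z : ℕ → G) :
    tvDist (P w) (P z) ≤ 1 := by
  have : ∑ a, |P w a - P z a| ≤ 2 := by
    calc ∑ a, |P w a - P z a| ≤ ∑ a, (P w a + P z a) :=
      Finset.sum_le_sum fun a _ => (abs_sub _ _).trans (by
        rw [abs_of_nonneg ((hP w).1 a), abs_of_nonneg ((hP z).1 a)])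
    _ = 2 := by rw [Finset.sum_add_distrib, (hP w).2, (hP z).2]; norm_num
  unfold tvDist; linarith

lemma tvDist_le_eta (P : (ℕ → G) → G → ℝ) (hP : IsKernel P) {s : List G} {w z : ℕ → G}
    (hw : w ∈ tree s) (hz : z ∈ tree s) : tvDist (P w) (P z) ≤ eta P s := by
  have h1 : tvDist (P w) (P z) ≤ ⨆ z' : tree s, tvDist (P w) (P z') :=
    le_ciSup (f := fun z' : tree s => tvDist (P w) (P z'.1))
      ⟨1, by rintro x ⟨z', rfl⟩; exact tvDist_le_one P hP _ _⟩ ⟨z, hz⟩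
  refine h1.trans (le_ciSup (f := fun w' : tree s => ⨆ z' : tree s, tvDist (P w'.1) (P z')) ?_ ⟨w, hw⟩)
  exact ⟨1, by rintro x ⟨w', rfl⟩; exact Real.iSup_le (fun z' => tvDist_le_one P hP _ _) zero_le_one⟩

lemma sub_le_tvDist {p q : G → ℝ} (h : ∑ a, p a = ∑ a, q a) (g : G) :
    p g - q g ≤ tvDist p q := by
  classical
  have hz : ∑ a, (p a - q a) = 0 := by rw [Finset.sum_sub_distrib, h, sub_self]
  have hsplit : (p g - q g) + ∑ a ∈ univ.erase g, (p a - q a) = 0 := by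
    rw [Finset.add_sum_erase univ (fun a => p a - q a) (mem_univ g)]; exact hz
  have h1 : -(∑ a ∈ univ.erase g, (p a - q a)) ≤ ∑ a ∈ univ.erase g, |p a - q a| := by
    rw [← Finset.sum_neg_distrib]
    exact Finset.sum_le_sum fun a _ => neg_le_abs _
  have habs : |p g - q g| + ∑ a ∈ univ.erase g, |p a - q a| = ∑ a, |p a - q a| :=
    Finset.add_sum_erase univ (fun a => |p a - q a|) (mem_univ g)
  unfold tvDist
  have := le_abs_self (p g - q g)
  linarith

lemma aCoef_ge (P : (ℕ → G) → G → ℝ) (hP : IsKernel P) {s : List G} {z : ℕ → G}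
    (hz : z ∈ tree s) (g : G) : P z g - eta P s ≤ aCoef P g s := by
  have : Nonempty (tree s) := ⟨⟨z, hz⟩⟩
  refine le_ciInf fun v => ?_
  have h1 := sub_le_tvDist (p := P z) (q := P v.1) ((hP z).2.trans (hP v.1).2.symm) g
  have h2 := tvDist_le_eta P hP hz v.2
  linarith
end Aux

section Aux2
variable [Fintype G] [LinearOrder G]

lemma ACoef_ge (P : (ℕ → G) → G → ℝ) (hP : IsKernel P) {s : List G} {z : ℕ → G}
    (hz : z ∈ tree s) : 1 - (Fintype.card G : ℝ) * eta P s ≤ ACoef P s := by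
  have h1 : ∑ g, (P z g - eta P s) ≤ ACoef P s :=
    Finset.sum_le_sum fun g _ => aCoef_ge P hP hz g
  have h2 : ∑ g, (P z g - eta P s) = 1 - (Fintype.card G : ℝ) * eta P s := by
    rw [Finset.sum_sub_distrib, (hP z).2, Finset.sum_const, Finset.card_univ,
      nsmul_eq_mul]
  linarith

lemma ACoef_word_mono (P : (ℕ → G) → G → ℝ) (hP : IsKernel P) (w : ℕ → G)
    {k m : ℕ} (hkm : k ≤ m) : ACoef P (word w k) ≤ ACoef P (word w m) :=
  Finset.sum_le_sum fun g _ => aCoef_word_mono P hP w g hkm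

lemma term_nonneg (P : (ℕ → G) → G → ℝ) (hP : IsKernel P) (w : ℕ → G) (k : ℕ) (h : G) :
    0 ≤ aCoef P h (word w k) - if k = 0 then 0 else aCoef P h (word w (k - 1)) := by
  rcases k with _ | k
  · simpa using aCoef_nonneg P hP h (word w 0)
  · simp only [Nat.succ_ne_zero, if_false, Nat.add_sub_cancel, sub_nonneg]
    exact aCoef_word_mono P hP w h (Nat.le_succ k)

lemma base_le_alpha (P : (ℕ → G) → G → ℝ) (hP : IsKernel P) (w : ℕ → G) (k : ℕ) (g : G) :
    (if k = 0 then 0 else ACoef P (word w (k - 1))) ≤ alphaCoef P k g w :=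
  le_add_of_nonneg_right (Finset.sum_nonneg fun h _ => term_nonneg P hP w k h)

lemma beta_le_ACoef (P : (ℕ → G) → G → ℝ) (hP : IsKernel P) (w : ℕ → G) (k : ℕ) (g : G) :
    betaCoef P k g w ≤ ACoef P (word w k) := by
  have hsub : betaCoef P k g w ≤ (if k = 0 then 0 else ACoef P (word w (k - 1))) +
      ∑ h, (aCoef P h (word w k) - if k = 0 then 0 else aCoef P h (word w (k - 1))) := by
    refine add_le_add (le_refl _) ?_
    exact Finset.sum_le_sum_of_subset_of_nonneg (Finset.filter_subset _ _)
      (fun h _ _ => term_nonneg P hP w k h)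
  refine hsub.trans (le_of_eq ?_)
  rw [Finset.sum_sub_distrib]
  rcases k with _ | k
  · simp [ACoef]
  · simp only [Nat.succ_ne_zero, if_false, Nat.add_sub_cancel]
    rw [← ACoef, ← ACoef]; ring

lemma beta_le_alpha (P : (ℕ → G) → G → ℝ) (hP : IsKernel P) (w : ℕ → G) (k : ℕ)
    {g g' : G} (hgg : g < g') : betaCoef P k g w ≤ alphaCoef P k g' w := by
  refine add_le_add (le_refl _) ?_
  refine Finset.sum_le_sum_of_subset_of_nonneg ?_ (fun h _ _ => term_nonneg P hP w k h)
  intro h hh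
  simp only [Finset.mem_filter, Finset.mem_univ, true_and] at hh ⊢
  exact lt_of_le_of_lt hh hgg

lemma alpha_congr (P : (ℕ → G) → G → ℝ) {s : List G} {w z : ℕ → G}
    (hw : w ∈ tree s) (hz : z ∈ tree s) {k : ℕ} (hk : k ≤ s.length) (g : G) :
    alphaCoef P k g w = alphaCoef P k g z := by
  have h1 : word w k = word z k := word_eq_word hw hz hk
  have h2 : word w (k - 1) = word z (k - 1) :=
    word_eq_word hw hz ((Nat.sub_le k 1).trans hk)
  simp only [alphaCoef, h1, h2]

lemma beta_congr (P : (ℕ → G) → G → ℝ) {s : List G} {w z : ℕ → G}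
    (hw : w ∈ tree s) (hz : z ∈ tree s) {k : ℕ} (hk : k ≤ s.length) (g : G) :
    betaCoef P k g w = betaCoef P k g z := by
  have h1 : word w k = word z k := word_eq_word hw hz hk
  have h2 : word w (k - 1) = word z (k - 1) :=
    word_eq_word hw hz ((Nat.sub_le k 1).trans hk)
  simp only [betaCoef, h1, h2]

lemma update_unique (P : (ℕ → G) → G → ℝ) (hP : IsKernel P) (w : ℕ → G) (u : ℝ)
    {k k' : ℕ} {g g' : G}
    (h1 : alphaCoef P k g w ≤ u) (h2 : u < betaCoef P k g w)
    (h3 : alphaCoef P k' g' w ≤ u) (h4 : u < betaCoef P k' g' w) : g = g' := by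
  have key : ∀ (a b : ℕ) (x y : G), a < b → alphaCoef P a x w ≤ u →
      u < betaCoef P a x w → alphaCoef P b y w ≤ u → False := by
    intro a b x y hab ha1 ha2 hb1
    have hb0 : b ≠ 0 := by omega
    have hstep : ACoef P (word w a) ≤ ACoef P (word w (b - 1)) :=
      ACoef_word_mono P hP w (Nat.le_sub_one_of_lt hab)
    have hbase : (if b = 0 then (0:ℝ) else ACoef P (word w (b - 1))) = ACoef P (word w (b - 1)) := by
      simp [hb0]
    have := base_le_alpha P hP w b y
    have h5 := beta_le_ACoef P hP w a x
    rw [hbase] at this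
    linarith
  rcases lt_trichotomy k k' with hkk | hkk | hkk
  · exact absurd h3 (by intro h3; exact key k k' g g' hkk h1 h2 h3)
  · subst hkk
    rcases lt_trichotomy g g' with hg | hg | hg
    · exact absurd h3 (by intro h3; exact absurd h2 (not_lt.2 ((beta_le_alpha P hP w k hg).trans h3)))
    · exact hg
    · exact absurd h1 (by intro h1; exact absurd h4 (not_lt.2 ((beta_le_alpha P hP w k hg).trans h1)))
  · exact absurd h1 (by intro h1; exact key k' k g' g hkk h3 h4 h1)

lemma le_length (P : (ℕ → G) → G → ℝ) (hP : IsKernel P) {s : List G} {w : ℕ → G}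
    (hw : w ∈ tree s) {u : ℝ} (hu : u < ACoef P s) {k : ℕ} {g : G}
    (ha : alphaCoef P k g w ≤ u) : k ≤ s.length := by
  by_contra hn
  push_neg at hn
  have hk0 : k ≠ 0 := by omega
  have h1 : ACoef P s ≤ ACoef P (word w (k - 1)) := by
    have := ACoef_word_mono P hP w (k := s.length) (m := k - 1) (by omega)
    rwa [word_eq_self hw] at this
  have h2 := base_le_alpha P hP w k g
  rw [if_neg hk0] at h2
  linarith
end Aux2

/-- Equation (1): the update rule `φ_P` of a continuous kernel `P` satisfies: for every
word `s` and every `u ∈ [0,1)` with `u < 1 - |G|·η_P(s)`, `φ_P(u, ·)` is constant on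
`tree s`. -/
theorem stmt_5 [Fintype G] [Nonempty G] [LinearOrder G] (P : (ℕ → G) → G → ℝ)
    (hP : IsKernel P) (hc : KernelContinuous P)
    (φ : ℝ → (ℕ → G) → G) (hφ : IsUpdateRule P φ) :
    ∀ s : List G, ∀ u ∈ Set.Ico (0 : ℝ) 1, u < 1 - (Fintype.card G : ℝ) * eta P s →
      ∀ w ∈ tree s, ∀ z ∈ tree s, φ u w = φ u z := by
  intro s u hu hlt w hw z hz
  obtain ⟨k₁, h1a, h1b⟩ := hφ u hu w
  obtain ⟨k₂, h2a, h2b⟩ := hφ u hu z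
  have hus : u < ACoef P s := hlt.trans_le (ACoef_ge P hP hw)
  have hk2 : k₂ ≤ s.length := le_length P hP hz hus h2a
  rw [alpha_congr P hz hw hk2 (φ u z)] at h2a
  rw [beta_congr P hz hw hk2 (φ u z)] at h2b
  exact update_unique P hP w u h1a h1b h2a h2b
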